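/- Let V be the vertex set of a median graph, and fix x₀, x ∈ V and an integer n ≥ 1 with d_nor(x₀,x) ≥ n; let v and H_n be as defined. Then for every w ∈ [x₀,x] the following are equivalent: (1) d_nor(x₀,w) = n; (2) w ∈ [x₀,v] and there exists h ∈ H_n with w ∉ h. -/

import Mathlib

open scoped ENNReal

namespace MedianGraph

variable {V : Type*}

/-- The metric interval `[x,y]` in a graph with respect to the edge-path metric. -/
def itv (G : SimpleGraph V) (x y : V) : Set V :=
  {z | G.dist x z + G.dist z y = G.dist x y}

/-- A subset of the vertex set is convex if it contains every interval between
two of its points. -/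
def Cvx (G : SimpleGraph V) (S : Set V) : Prop :=
  ∀ a ∈ S, ∀ b ∈ S, itv G a b ⊆ S

/-- A median graph: a connected graph in which every triple of vertices has a
unique median. -/
def IsMedianGraph (G : SimpleGraph V) : Prop :=
  G.Connected ∧ ∀ x y z : V, ∃! m : V,
    m ∈ itv G x y ∧ m ∈ itv G y z ∧ m ∈ itv G z x

/-- A halfspace: a subset which is nonempty, proper, convex with convex complement. -/
def IsHalfspace (G : SimpleGraph V) (h : Set V) : Prop :=
  h.Nonempty ∧ hᶜ.Nonempty ∧ Cvx G h ∧ Cvx G hᶜ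

/-- `Hset G x y` is the set of halfspaces containing `x` but not `y`. -/
def Hset (G : SimpleGraph V) (x y : V) : Set (Set V) :=
  {h | IsHalfspace G h ∧ x ∈ h ∧ y ∉ h}

/-- The normal distance `d_nor(x,y)`: the maximum cardinality of a chain (under
inclusion) in `Hset G x y`. -/
noncomputable def dnor (G : SimpleGraph V) (x y : V) : ℕ :=
  sSup {n : ℕ | ∃ c : Set (Set V), c ⊆ Hset G x y ∧ IsChain (· ⊆ ·) c ∧ c.encard = n}

/-- Two halfspaces cross if all four intersections of them and their
complements are nonempty. -/
def Crosses (h k : Set V) : Prop :=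
  (h ∩ k).Nonempty ∧ (h ∩ kᶜ).Nonempty ∧ (hᶜ ∩ k).Nonempty ∧ (hᶜ ∩ kᶜ).Nonempty

/-- `Hn G x₀ x n`: the halfspaces `h` in `Hset G x₀ x` such that the maximum
cardinality of a chain in `{k ∈ H(x₀,x) : k ⊆ h}` equals `n`. -/
noncomputable def Hn (G : SimpleGraph V) (x₀ x : V) (n : ℕ) : Set (Set V) :=
  {h | h ∈ Hset G x₀ x ∧
    sSup {m : ℕ | ∃ c : Set (Set V), c ⊆ {k | k ∈ Hset G x₀ x ∧ k ⊆ h} ∧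
      IsChain (· ⊆ ·) c ∧ c.encard = m} = n}

/-- `Fh G x₀ x n h = {w ∈ [x₀,x] ∩ S_nor(x₀,n) : w ∉ h}`. -/
def Fh (G : SimpleGraph V) (x₀ x : V) (n : ℕ) (h : Set V) : Set V :=
  {w | w ∈ itv G x₀ x ∧ dnor G x₀ w = n ∧ w ∉ h}

/-- The graph has dimension at most `η` if every family of pairwise crossing
halfspaces has cardinality at most `η`. -/
def DimLE (G : SimpleGraph V) (η : ℕ) : Prop :=
  ∀ F : Set (Set V), (∀ h ∈ F, IsHalfspace G h) →
    (∀ h ∈ F, ∀ k ∈ F, h ≠ k → Crosses h k) → F.encard ≤ η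

end MedianGraph

open MedianGraph

namespace MedianGraph

variable {V : Type*} {G : SimpleGraph V}

/-- The set of cardinalities of finite chains of halfspaces separating `a` from `b`. -/
private def chainSizes (G : SimpleGraph V) (a b : V) : Set ℕ :=
  {m : ℕ | ∃ c : Set (Set V), c ⊆ Hset G a b ∧ IsChain (· ⊆ ·) c ∧ c.encard = m}

private lemma dnor_eq_sSup (a b : V) : dnor G a b = sSup (chainSizes G a b) := rfl

private lemma zero_mem_chainSizes (a b : V) : 0 ∈ chainSizes G a b :=
  ⟨∅, Set.empty_subset _, IsChain.empty, by simp⟩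

private lemma mem_Hset_of_itv {a b w : V} (hw : w ∈ itv G a b) {h : Set V}
    (hh : h ∈ Hset G a w) : h ∈ Hset G a b := by
  obtain ⟨hhs, ha, hwn⟩ := hh
  refine ⟨hhs, ha, fun hb => hwn ?_⟩
  exact hhs.2.2.1 a ha b hb hw

private lemma chainSizes_mono {a b w : V} (hw : w ∈ itv G a b) :
    chainSizes G a w ⊆ chainSizes G a b := by
  rintro m ⟨c, hc, hch, he⟩
  exact ⟨c, fun k hk => mem_Hset_of_itv hw (hc hk), hch, he⟩

private lemma bddAbove_chainSizes {a b : V} (hpos : 0 < sSup (chainSizes G a b)) :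
    BddAbove (chainSizes G a b) := by
  by_contra hb
  rw [csSup_of_not_bddAbove hb, csSup_empty] at hpos
  simp at hpos

/-- If every chain size towards `w` and towards `v` is at most `n`, then any point
in the interval `[w,v]` has normal distance at most `n` from `x₀`. -/
private lemma dnor_le_of_mem_itv {x₀ w v m : V} {n : ℕ}
    (hw : ∀ k ∈ chainSizes G x₀ w, k ≤ n)
    (hv : ∀ k ∈ chainSizes G x₀ v, k ≤ n)
    (hm : m ∈ itv G w v) : dnor G x₀ m ≤ n := by
  rw [dnor_eq_sSup]
  refine csSup_le ⟨0, zero_mem_chainSizes _ _⟩ ?_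
  rintro k ⟨c, hc, hch, he⟩
  rcases Set.eq_empty_or_nonempty c with rfl | hne
  · simp only [Set.encard_empty] at he
    have : k = 0 := by exact_mod_cast he.symm
    omega
  · have hfin : c.Finite := Set.finite_of_encard_eq_coe he
    obtain ⟨g, hg, hmax⟩ := Set.Finite.exists_maximalFor id c hfin hne
    have hgtop : ∀ h ∈ c, h ⊆ g := by
      intro h hh
      rcases eq_or_ne h g with rfl | hne'
      · exact subset_rfl
      · rcases hch hh hg hne' with h1 | h1
        · exact h1
        · exact hmax hh h1
    have hwv : w ∉ g ∨ v ∉ g := by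
      by_contra hcon
      push_neg at hcon
      exact (hc hg).2.2 ((hc hg).1.2.2.1 w hcon.1 v hcon.2 hm)
    rcases hwv with hng | hng
    · refine hw k ⟨c, fun h hh => ?_, hch, he⟩
      exact ⟨(hc hh).1, (hc hh).2.1, fun hwh => hng (hgtop h hh hwh)⟩
    · refine hv k ⟨c, fun h hh => ?_, hch, he⟩
      exact ⟨(hc hh).1, (hc hh).2.1, fun hwh => hng (hgtop h hh hwh)⟩

/-- Concatenation of intervals: if `v ∈ [x₀,x]` and `m ∈ [v,x]` then `m ∈ [x₀,x]`
and `v ∈ [x₀,m]`. -/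
private lemma itv_trans (hconn : G.Connected) {x₀ x v m : V}
    (hv : v ∈ itv G x₀ x) (hm : m ∈ itv G v x) :
    m ∈ itv G x₀ x ∧ v ∈ itv G x₀ m := by
  have hv' : G.dist x₀ v + G.dist v x = G.dist x₀ x := hv
  have hm' : G.dist v m + G.dist m x = G.dist v x := hm
  have t1 : G.dist x₀ m ≤ G.dist x₀ v + G.dist v m := hconn.dist_triangle
  have t2 : G.dist x₀ x ≤ G.dist x₀ m + G.dist m x := hconn.dist_triangle
  constructor
  · show G.dist x₀ m + G.dist m x = G.dist x₀ x
    omega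
  · show G.dist x₀ v + G.dist v m = G.dist x₀ m
    omega

end MedianGraph


/-- In a median graph, fix `x₀, x`, an integer `n ≥ 1` with
`d_nor(x₀,x) ≥ n`, and let `v` be the point of `[x₀,x] ∩ B_nor(x₀,n)` at maximal
distance from `x₀`. Then for every `w ∈ [x₀,x]`: `d_nor(x₀,w) = n` if and only if
`w ∈ [x₀,v]` and there exists `h ∈ H_n` with `w ∉ h`. -/
theorem normal_sphere_char {V : Type*} (G : SimpleGraph V) (hG : IsMedianGraph G)
    (x₀ x : V) (n : ℕ) (hn : 1 ≤ n) (hd : n ≤ dnor G x₀ x)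
    (v : V) (hv₁ : v ∈ itv G x₀ x) (hv₂ : dnor G x₀ v ≤ n)
    (hv₃ : ∀ w ∈ itv G x₀ x, dnor G x₀ w ≤ n → G.dist x₀ w ≤ G.dist x₀ v) :
    ∀ w ∈ itv G x₀ x,
      (dnor G x₀ w = n ↔ w ∈ itv G x₀ v ∧ ∃ h ∈ Hn G x₀ x n, w ∉ h) := by
  obtain ⟨hconn, hmed⟩ := hG
  -- Boundedness of the chain-size sets.
  have hbx : BddAbove (chainSizes G x₀ x) := by
    refine bddAbove_chainSizes ?_
    rw [← dnor_eq_sSup]; omega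
  have hbv : BddAbove (chainSizes G x₀ v) := hbx.mono (chainSizes_mono hv₁)
  have hvle : ∀ k ∈ chainSizes G x₀ v, k ≤ n := by
    intro k hk
    exact (le_csSup hbv hk).trans hv₂
  intro w hw
  have hbw : BddAbove (chainSizes G x₀ w) := hbx.mono (chainSizes_mono hw)
  constructor
  · -- forward direction
    intro hdw
    have hdw' : sSup (chainSizes G x₀ w) = n := hdw
    have hwle : ∀ k ∈ chainSizes G x₀ w, k ≤ n := by
      intro k hk
      exact (le_csSup hbw hk).trans hdw'.le
    -- (b) `w ∈ [x₀, v]` via the median of `(w, v, x)`.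
    obtain ⟨m, ⟨hm1, hm2, hm3⟩, -⟩ := hmed w v x
    have hmx : m ∈ itv G x₀ x ∧ v ∈ itv G x₀ m := itv_trans hconn hv₁ hm2
    have hdm : dnor G x₀ m ≤ n := dnor_le_of_mem_itv hwle hvle hm1
    have hdle : G.dist x₀ m ≤ G.dist x₀ v := hv₃ m hmx.1 hdm
    have hvm : v = m := by
      have h1 : G.dist x₀ v + G.dist v m = G.dist x₀ m := hmx.2
      have h0 : G.dist v m = 0 := by omega
      exact (hconn.dist_eq_zero_iff).mp h0
    have hwmem : w ∈ itv G x₀ v := by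
      show G.dist x₀ w + G.dist w v = G.dist x₀ v
      have e1 : G.dist x₀ w + G.dist w x = G.dist x₀ x := hw
      have e2 : G.dist x₀ v + G.dist v x = G.dist x₀ x := hv₁
      have e3 : G.dist x v + G.dist v w = G.dist x w := by rw [hvm]; exact hm3
      have c1 : G.dist x v = G.dist v x := SimpleGraph.dist_comm
      have c2 : G.dist v w = G.dist w v := SimpleGraph.dist_comm
      have c3 : G.dist x w = G.dist w x := SimpleGraph.dist_comm
      omega
    refine ⟨hwmem, ?_⟩
    -- (a) existence of `h ∈ Hn` avoiding `w`.
    have hnmem : n ∈ chainSizes G x₀ w := by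
      rw [← hdw']
      exact Nat.sSup_mem ⟨0, zero_mem_chainSizes _ _⟩ hbw
    obtain ⟨c, hc, hch, he⟩ := hnmem
    have hne : c.Nonempty := by
      rw [Set.nonempty_iff_ne_empty]
      rintro rfl
      simp only [Set.encard_empty] at he
      have : n = 0 := by exact_mod_cast he.symm
      omega
    have hfin : c.Finite := Set.finite_of_encard_eq_coe he
    obtain ⟨g, hg, hmax⟩ := Set.Finite.exists_maximalFor id c hfin hne
    have hgtop : ∀ h ∈ c, h ⊆ g := by
      intro h hh
      rcases eq_or_ne h g with rfl | hne'
      · exact subset_rfl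
      · rcases hch hh hg hne' with h1 | h1
        · exact h1
        · exact hmax hh h1
    have hgw : w ∉ g := (hc hg).2.2
    refine ⟨g, ⟨mem_Hset_of_itv hw (hc hg), ?_⟩, hgw⟩
    -- the depth of `g` in `H(x₀,x)` is exactly `n`
    have hDsub : {m : ℕ | ∃ c' : Set (Set V), c' ⊆ {k | k ∈ Hset G x₀ x ∧ k ⊆ g} ∧
        IsChain (· ⊆ ·) c' ∧ c'.encard = m} ⊆ chainSizes G x₀ w := by
      rintro m ⟨c', hc', hch', he'⟩
      refine ⟨c', fun k hk => ?_, hch', he'⟩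
      exact ⟨(hc' hk).1.1, (hc' hk).1.2.1, fun hwk => hgw ((hc' hk).2 hwk)⟩
    have hnD : n ∈ {m : ℕ | ∃ c' : Set (Set V), c' ⊆ {k | k ∈ Hset G x₀ x ∧ k ⊆ g} ∧
        IsChain (· ⊆ ·) c' ∧ c'.encard = m} :=
      ⟨c, fun k hk => ⟨mem_Hset_of_itv hw (hc hk), hgtop k hk⟩, hch, he⟩
    refine le_antisymm ?_ (le_csSup (hbw.mono hDsub) hnD)
    refine csSup_le ⟨n, hnD⟩ ?_
    intro m hm
    exact (le_csSup hbw (hDsub hm)).trans hdw'.le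
  · -- backward direction
    rintro ⟨hwv, h, ⟨hhx, hdepth⟩, hwh⟩
    have hle : dnor G x₀ w ≤ n := by
      rw [dnor_eq_sSup]
      refine csSup_le ⟨0, zero_mem_chainSizes _ _⟩ ?_
      intro k hk
      exact hvle k (chainSizes_mono hwv hk)
    have hDsub : {m : ℕ | ∃ c' : Set (Set V), c' ⊆ {k | k ∈ Hset G x₀ x ∧ k ⊆ h} ∧
        IsChain (· ⊆ ·) c' ∧ c'.encard = m} ⊆ chainSizes G x₀ x := by
      rintro m ⟨c', hc', hch', he'⟩
      exact ⟨c', fun k hk => (hc' hk).1, hch', he'⟩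
    have hD0 : (0 : ℕ) ∈ {m : ℕ | ∃ c' : Set (Set V), c' ⊆ {k | k ∈ Hset G x₀ x ∧ k ⊆ h} ∧
        IsChain (· ⊆ ·) c' ∧ c'.encard = m} :=
      ⟨∅, Set.empty_subset _, IsChain.empty, by simp⟩
    have hnD : n ∈ {m : ℕ | ∃ c' : Set (Set V), c' ⊆ {k | k ∈ Hset G x₀ x ∧ k ⊆ h} ∧
        IsChain (· ⊆ ·) c' ∧ c'.encard = m} := by
      rw [← hdepth]
      exact Nat.sSup_mem ⟨0, hD0⟩ (hbx.mono hDsub)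
    obtain ⟨c', hc', hch', he'⟩ := hnD
    have hge : n ≤ dnor G x₀ w := by
      rw [dnor_eq_sSup]
      refine le_csSup hbw ⟨c', fun k hk => ?_, hch', he'⟩
      exact ⟨(hc' hk).1.1, (hc' hk).1.2.1, fun hwk => hwh ((hc' hk).2 hwk)⟩
    omega
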